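/- For every n ≥ 1, (1/n²) · Σ_{i,j,k,l=1}^{n} ⟨f_i, f_j⟩_H · ⟨f_k, f_l⟩_H · ⟨f_i, f_k⟩_H · ⟨f_j, f_l⟩_H ≤ 24 S₂⁴ / (n (1 − a²)⁷). (This quantity dominates the squared contraction norm ‖g_{4,n} ⊗₂ g_{4,n}‖²_{L²}, yielding the bound C_{4,2}/√n of the paper.) -/

import Mathlib

open Finset
open scoped RealInnerProductSpace

/-- Closed-form majorant for `∑ d, s^d (d+c)^2`. -/
noncomputable def Kq (s c : ℝ) : ℝ :=
  (c ^ 2 * (1 - s) ^ 2 + 2 * c * s * (1 - s) + s * (1 + s)) / (1 - s) ^ 3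

lemma Kq_nonneg {s c : ℝ} (hs0 : 0 ≤ s) (hs1 : s < 1) (hc : 0 ≤ c) : 0 ≤ Kq s c := by
  have h1 : (0:ℝ) < 1 - s := by linarith
  apply div_nonneg _ (by positivity)
  have t0 : 0 ≤ c ^ 2 * (1 - s) ^ 2 := by positivity
  have t1 : 0 ≤ 2 * c * s * (1 - s) := mul_nonneg (by positivity) h1.le
  have t2 : 0 ≤ s * (1 + s) := mul_nonneg hs0 (by linarith)
  linarith

lemma Kq_rec {s : ℝ} (hs : s ≠ 1) (x : ℝ) : Kq s x = x ^ 2 + s * Kq s (x + 1) := by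
  have h : (1 : ℝ) - s ≠ 0 := by intro h; apply hs; linarith
  unfold Kq
  field_simp
  ring

lemma quad_sum_eq {s : ℝ} (hs : s ≠ 1) (c : ℝ) :
    ∀ N : ℕ, (∑ d ∈ range N, s ^ d * ((d : ℝ) + c) ^ 2) + s ^ N * Kq s (c + N) = Kq s c := by
  intro N
  induction N with
  | zero => simp
  | succ N ih =>
    rw [sum_range_succ]
    have key : s ^ N * ((N : ℝ) + c) ^ 2 + s ^ (N + 1) * Kq s (c + (N + 1 : ℕ)) =
        s ^ N * Kq s (c + N) := by
      have h2 := Kq_rec hs (c + (N : ℝ))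
      push_cast
      rw [h2, pow_succ]
      ring
    linarith

lemma quad_sum_le {s : ℝ} (hs0 : 0 ≤ s) (hs1 : s < 1) {c : ℝ} (hc : 0 ≤ c)
    {T : Finset ℕ} : ∑ d ∈ T, s ^ d * ((d : ℝ) + c) ^ 2 ≤ Kq s c := by
  obtain ⟨N, hN⟩ := T.exists_nat_subset_range
  have h1 : ∑ d ∈ T, s ^ d * ((d : ℝ) + c) ^ 2 ≤ ∑ d ∈ range N, s ^ d * ((d : ℝ) + c) ^ 2 :=
    sum_le_sum_of_subset_of_nonneg hN (fun d _ _ => by positivity)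
  have h2 := quad_sum_eq (ne_of_lt hs1) c N
  have h3 : 0 ≤ s ^ N * Kq s (c + N) :=
    mul_nonneg (by positivity) (Kq_nonneg hs0 hs1 (by positivity))
  linarith

lemma quad_geom_le {s : ℝ} (hs0 : 0 ≤ s) (hs1 : s < 1) {c : ℝ} (hc : 0 ≤ c)
    {g : ℕ → ℕ} {S : Finset ℕ} (hg : Set.InjOn g S) :
    ∑ k ∈ S, s ^ (g k) * ((g k : ℝ) + c) ^ 2 ≤ Kq s c := by
  have h1 := Finset.sum_image (s := S) (g := g)
    (f := fun t : ℕ => s ^ t * ((t : ℝ) + c) ^ 2) (fun x hx y hy h => hg hx hy h)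
  rw [← h1]
  exact quad_sum_le hs0 hs1 hc

lemma geom_inj_le {s : ℝ} (hs0 : 0 ≤ s) (hs1 : s < 1)
    {g : ℕ → ℕ} {S : Finset ℕ} (hg : Set.InjOn g S) :
    ∑ k ∈ S, s ^ (g k) ≤ 1 / (1 - s) := by
  have h0 := Finset.sum_image (s := S) (g := g)
    (f := fun t : ℕ => s ^ t) (fun x hx y hy h => hg hx hy h)
  rw [← h0]
  have h1 : ∑ t ∈ S.image g, s ^ t ≤ ∑' t : ℕ, s ^ t :=
    Summable.sum_le_tsum _ (fun t _ => by positivity) (summable_geometric_of_lt_one hs0 hs1)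
  rw [tsum_geometric_of_lt_one hs0 hs1] at h1
  rw [one_div]
  exact h1

lemma Bsum_aux {r : ℝ} (hr0 : 0 ≤ r) (hr1 : r < 1) (n j k : ℕ) (hjk : j ≤ k) :
    ∑ i ∈ Finset.Icc 1 n, r ^ (Nat.dist i j) * r ^ (Nat.dist i k) ≤
      r ^ (k - j) * (((k - j : ℕ) : ℝ) + 1 + 2 / (1 - r ^ 2)) := by
  have hs0 : (0:ℝ) ≤ r ^ 2 := by positivity
  have hs1 : r ^ 2 < 1 := by nlinarith
  have h1s : (0:ℝ) < 1 - r ^ 2 := by linarith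
  set s := r ^ 2 with hs
  set S := Finset.Icc 1 n with hS
  rw [← Finset.sum_filter_add_sum_filter_not S (fun i => i < j)]
  have e2 : ∑ i ∈ S.filter (fun i => ¬ i < j), r ^ (Nat.dist i j) * r ^ (Nat.dist i k) =
      (∑ i ∈ (S.filter (fun i => ¬ i < j)).filter (fun i => i ≤ k),
        r ^ (Nat.dist i j) * r ^ (Nat.dist i k)) +
      ∑ i ∈ (S.filter (fun i => ¬ i < j)).filter (fun i => ¬ i ≤ k),
        r ^ (Nat.dist i j) * r ^ (Nat.dist i k) :=
    (Finset.sum_filter_add_sum_filter_not _ _ _).symm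
  rw [e2]
  have p1 : ∑ i ∈ S.filter (fun i => i < j), r ^ (Nat.dist i j) * r ^ (Nat.dist i k) ≤
      r ^ (k - j) * (1 / (1 - s)) := by
    have e1 : ∀ i ∈ S.filter (fun i => i < j),
        r ^ (Nat.dist i j) * r ^ (Nat.dist i k) = r ^ (k - j) * s ^ (j - i) := by
      intro i hi
      simp only [Finset.mem_filter] at hi
      have hij : i < j := hi.2
      rw [hs, ← pow_mul, ← pow_add, ← pow_add]
      congr 1
      have d1 : Nat.dist i j = j - i := by unfold Nat.dist; omega
      have d2 : Nat.dist i k = k - i := by unfold Nat.dist; omega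
      omega
    rw [Finset.sum_congr rfl e1, ← Finset.mul_sum]
    apply mul_le_mul_of_nonneg_left _ (by positivity)
    apply geom_inj_le hs0 hs1 (g := fun i => j - i)
    intro x hx y hy hxy
    simp only [Finset.coe_filter, Set.mem_setOf_eq] at hx hy
    dsimp only at hxy
    omega
  have p2 : ∑ i ∈ (S.filter (fun i => ¬ i < j)).filter (fun i => i ≤ k),
      r ^ (Nat.dist i j) * r ^ (Nat.dist i k) ≤ (((k - j : ℕ) : ℝ) + 1) * r ^ (k - j) := by
    have e1 : ∀ i ∈ (S.filter (fun i => ¬ i < j)).filter (fun i => i ≤ k),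
        r ^ (Nat.dist i j) * r ^ (Nat.dist i k) = r ^ (k - j) := by
      intro i hi
      simp only [Finset.mem_filter] at hi
      rw [← pow_add]
      congr 1
      have d1 : Nat.dist i j = i - j := by unfold Nat.dist; omega
      have d2 : Nat.dist i k = k - i := by unfold Nat.dist; omega
      omega
    rw [Finset.sum_congr rfl e1, Finset.sum_const, nsmul_eq_mul]
    apply mul_le_mul_of_nonneg_right _ (by positivity)
    have hsub : (S.filter (fun i => ¬ i < j)).filter (fun i => i ≤ k) ⊆ Finset.Icc j k := by
      intro x hx
      simp only [Finset.mem_filter, hS, Finset.mem_Icc] at hx ⊢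
      omega
    have h3 := Finset.card_le_card hsub
    rw [Nat.card_Icc] at h3
    have h4 : ((S.filter (fun i => ¬ i < j)).filter (fun i => i ≤ k)).card ≤ k - j + 1 := by
      omega
    calc (((S.filter (fun i => ¬ i < j)).filter (fun i => i ≤ k)).card : ℝ)
        ≤ ((k - j + 1 : ℕ) : ℝ) := by exact_mod_cast h4
      _ = ((k - j : ℕ) : ℝ) + 1 := by push_cast; ring
  have p3 : ∑ i ∈ (S.filter (fun i => ¬ i < j)).filter (fun i => ¬ i ≤ k),
      r ^ (Nat.dist i j) * r ^ (Nat.dist i k) ≤ r ^ (k - j) * (1 / (1 - s)) := by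
    have e1 : ∀ i ∈ (S.filter (fun i => ¬ i < j)).filter (fun i => ¬ i ≤ k),
        r ^ (Nat.dist i j) * r ^ (Nat.dist i k) = r ^ (k - j) * s ^ (i - k) := by
      intro i hi
      simp only [Finset.mem_filter] at hi
      rw [hs, ← pow_mul, ← pow_add, ← pow_add]
      congr 1
      have d1 : Nat.dist i j = i - j := by unfold Nat.dist; omega
      have d2 : Nat.dist i k = i - k := by unfold Nat.dist; omega
      omega
    rw [Finset.sum_congr rfl e1, ← Finset.mul_sum]
    apply mul_le_mul_of_nonneg_left _ (by positivity)
    apply geom_inj_le hs0 hs1 (g := fun i => i - k)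
    intro x hx y hy hxy
    simp only [Finset.coe_filter, Set.mem_setOf_eq] at hx hy
    dsimp only at hxy
    omega
  calc _ ≤ r ^ (k - j) * (1 / (1 - s)) + ((((k - j : ℕ) : ℝ) + 1) * r ^ (k - j)
        + r ^ (k - j) * (1 / (1 - s))) := add_le_add p1 (add_le_add p2 p3)
    _ = r ^ (k - j) * (((k - j : ℕ) : ℝ) + 1 + 2 / (1 - s)) := by ring

lemma Bsum_le {r : ℝ} (hr0 : 0 ≤ r) (hr1 : r < 1) (n j k : ℕ) :
    ∑ i ∈ Finset.Icc 1 n, r ^ (Nat.dist i j) * r ^ (Nat.dist i k) ≤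
      r ^ (Nat.dist j k) * ((Nat.dist j k : ℝ) + 1 + 2 / (1 - r ^ 2)) := by
  rcases le_total j k with h | h
  · have hd : Nat.dist j k = k - j := by unfold Nat.dist; omega
    rw [hd]
    exact Bsum_aux hr0 hr1 n j k h
  · have hd : Nat.dist j k = j - k := by unfold Nat.dist; omega
    rw [hd]
    have e : ∀ i ∈ Finset.Icc 1 n, r ^ (Nat.dist i j) * r ^ (Nat.dist i k)
        = r ^ (Nat.dist i k) * r ^ (Nat.dist i j) := fun i _ => mul_comm _ _
    rw [Finset.sum_congr rfl e]
    exact Bsum_aux hr0 hr1 n k j h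

lemma Csum_le {s : ℝ} (hs0 : 0 ≤ s) (hs1 : s < 1) {c : ℝ} (hc : 0 ≤ c) (n j : ℕ) :
    ∑ k ∈ Finset.Icc 1 n, s ^ (Nat.dist j k) * ((Nat.dist j k : ℝ) + c) ^ 2 ≤
      2 * Kq s c := by
  rw [← Finset.sum_filter_add_sum_filter_not (Finset.Icc 1 n) (fun k => k ≤ j)]
  have p1 : ∑ k ∈ (Finset.Icc 1 n).filter (fun k => k ≤ j),
      s ^ (Nat.dist j k) * ((Nat.dist j k : ℝ) + c) ^ 2 ≤ Kq s c := by
    apply quad_geom_le hs0 hs1 hc (g := fun k => Nat.dist j k)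
    intro x hx y hy hxy
    simp only [Finset.coe_filter, Set.mem_setOf_eq] at hx hy
    dsimp only at hxy
    unfold Nat.dist at hxy
    omega
  have p2 : ∑ k ∈ (Finset.Icc 1 n).filter (fun k => ¬ k ≤ j),
      s ^ (Nat.dist j k) * ((Nat.dist j k : ℝ) + c) ^ 2 ≤ Kq s c := by
    apply quad_geom_le hs0 hs1 hc (g := fun k => Nat.dist j k)
    intro x hx y hy hxy
    simp only [Finset.coe_filter, Set.mem_setOf_eq] at hx hy
    dsimp only at hxy
    unfold Nat.dist at hxy
    omega
  linarith

section InnerBounds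
variable {H : Type*} [NormedAddCommGroup H] [InnerProductSpace ℝ H]

lemma inner_e_w (e : ℕ → ℕ → H) (σ : ℕ → ℝ)
    (he : Orthonormal ℝ (fun q : ℕ × ℕ => e q.1 q.2))
    (k δ k' : ℕ) (hk' : Summable (fun δ' => σ δ' • e k' δ')) :
    ⟪e k δ, ∑' δ', σ δ' • e k' δ'⟫ = if k = k' then σ δ else 0 := by
  have hv := orthonormal_iff_ite.mp he
  have h1 : ⟪e k δ, ∑' δ', σ δ' • e k' δ'⟫ = ∑' δ', σ δ' * ⟪e k δ, e k' δ'⟫ := by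
    simpa using (innerSL ℝ (e k δ)).map_tsum hk'
  rw [h1]
  have h2 : ∀ δ' : ℕ, σ δ' * ⟪e k δ, e k' δ'⟫ = if k = k' ∧ δ' = δ then σ δ else 0 := by
    intro δ'
    rw [hv (k, δ) (k', δ')]
    simp only [Prod.mk.injEq]
    by_cases h : k = k' ∧ δ = δ'
    · obtain ⟨h1', h2'⟩ := h
      subst h1'; subst h2'
      simp
    · rw [if_neg h, mul_zero, if_neg (fun hc => h ⟨hc.1, hc.2.symm⟩)]
  rw [tsum_congr h2]
  by_cases hkk : k = k'
  · simp only [hkk, true_and, if_pos rfl]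
    exact tsum_ite_eq δ (fun _ => σ δ)
  · simp only [hkk, false_and, if_neg hkk]
    exact tsum_zero

lemma inner_w_w_ne (e : ℕ → ℕ → H) (σ : ℕ → ℝ)
    (he : Orthonormal ℝ (fun q : ℕ × ℕ => e q.1 q.2))
    (k k' : ℕ) (hne : k ≠ k') :
    ⟪∑' δ, σ δ • e k δ, ∑' δ', σ δ' • e k' δ'⟫ = 0 := by
  by_cases hk : Summable (fun δ => σ δ • e k δ)
  · by_cases hk' : Summable (fun δ' => σ δ' • e k' δ')
    · have h1 : ⟪∑' δ', σ δ' • e k' δ', ∑' δ, σ δ • e k δ⟫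
          = ∑' δ, σ δ * ⟪∑' δ', σ δ' • e k' δ', e k δ⟫ := by
        simpa using (innerSL ℝ (∑' δ', σ δ' • e k' δ')).map_tsum hk
      rw [real_inner_comm, h1]
      have h2 : ∀ δ : ℕ, σ δ * ⟪∑' δ', σ δ' • e k' δ', e k δ⟫ = 0 := by
        intro δ
        rw [real_inner_comm, inner_e_w e σ he k δ k' hk', if_neg hne, mul_zero]
      rw [tsum_congr h2, tsum_zero]
    · rw [tsum_eq_zero_of_not_summable hk', inner_zero_right]
  · rw [tsum_eq_zero_of_not_summable hk, inner_zero_left]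

lemma inner_w_w_self (e : ℕ → ℕ → H) (σ : ℕ → ℝ)
    (he : Orthonormal ℝ (fun q : ℕ × ℕ => e q.1 q.2)) (k : ℕ) :
    ⟪∑' δ, σ δ • e k δ, ∑' δ, σ δ • e k δ⟫ = 0 ∨
    ⟪∑' δ, σ δ • e k δ, ∑' δ, σ δ • e k δ⟫ = ∑' δ, (σ δ) ^ 2 := by
  by_cases hk : Summable (fun δ => σ δ • e k δ)
  · right
    have h1 : ⟪∑' δ', σ δ' • e k δ', ∑' δ, σ δ • e k δ⟫
        = ∑' δ, σ δ * ⟪∑' δ', σ δ' • e k δ', e k δ⟫ := by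
      simpa using (innerSL ℝ (∑' δ', σ δ' • e k δ')).map_tsum hk
    rw [h1]
    apply tsum_congr
    intro δ
    rw [real_inner_comm, inner_e_w e σ he k δ k hk, if_pos rfl]
    ring
  · left
    rw [tsum_eq_zero_of_not_summable hk, inner_zero_left]

lemma inner_f_f (w : ℕ → H) (a : ℝ) (f : ℕ → H)
    (hQ0 : ∀ k k', k ≠ k' → ⟪w k, w k'⟫ = 0)
    (hf : ∀ i, f i = ∑ k ∈ Finset.Icc 1 i, a ^ (i - k) • w k) (i j : ℕ) :
    ⟪f i, f j⟫ = ∑ k ∈ Finset.Icc 1 (min i j), a ^ (i - k) * a ^ (j - k) * ⟪w k, w k⟫ := by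
  rw [hf i, hf j, sum_inner]
  have h1 : ∀ k ∈ Finset.Icc 1 i,
      ⟪a ^ (i - k) • w k, ∑ k' ∈ Finset.Icc 1 j, a ^ (j - k') • w k'⟫
      = if k ∈ Finset.Icc 1 j then a ^ (i - k) * a ^ (j - k) * ⟪w k, w k⟫ else 0 := by
    intro k _
    rw [inner_sum]
    have h2 : ∀ k' ∈ Finset.Icc 1 j, ⟪a ^ (i - k) • w k, a ^ (j - k') • w k'⟫
        = if k' = k then a ^ (i - k) * a ^ (j - k) * ⟪w k, w k⟫ else 0 := by
      intro k' _
      rw [real_inner_smul_left, real_inner_smul_right]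
      by_cases h : k' = k
      · subst h; rw [if_pos rfl]; ring
      · rw [hQ0 k k' (fun hh => h hh.symm), if_neg h, mul_zero, mul_zero]
    rw [Finset.sum_congr rfl h2, Finset.sum_ite_eq' (Finset.Icc 1 j) k]
  rw [Finset.sum_congr rfl h1, Finset.sum_ite_mem]
  have h3 : Finset.Icc 1 i ∩ Finset.Icc 1 j = Finset.Icc 1 (min i j) := by
    ext x; simp only [Finset.mem_inter, Finset.mem_Icc]; omega
  rw [h3]

lemma abs_inner_f_f (w : ℕ → H) (a : ℝ) (ha : |a| < 1) (f : ℕ → H) (S₂ : ℝ)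
    (hQ0 : ∀ k k', k ≠ k' → ⟪w k, w k'⟫ = 0)
    (hQ2 : ∀ k, ⟪w k, w k⟫ ≤ S₂)
    (hf : ∀ i, f i = ∑ k ∈ Finset.Icc 1 i, a ^ (i - k) • w k) (i j : ℕ) :
    |⟪f i, f j⟫| ≤ S₂ / (1 - a ^ 2) * |a| ^ (Nat.dist i j) := by
  have hS₂ : 0 ≤ S₂ := le_trans real_inner_self_nonneg (hQ2 0)
  have hr0 : (0:ℝ) ≤ |a| := abs_nonneg a
  have hs0 : (0:ℝ) ≤ a ^ 2 := sq_nonneg a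
  have hs1 : a ^ 2 < 1 := by rw [← sq_abs]; nlinarith
  have h1s : (0:ℝ) < 1 - a ^ 2 := by linarith
  rw [inner_f_f w a f hQ0 hf i j]
  set m := min i j with hm
  calc |∑ k ∈ Finset.Icc 1 m, a ^ (i - k) * a ^ (j - k) * ⟪w k, w k⟫|
      ≤ ∑ k ∈ Finset.Icc 1 m, |a ^ (i - k) * a ^ (j - k) * ⟪w k, w k⟫| :=
        Finset.abs_sum_le_sum_abs _ _
    _ ≤ ∑ k ∈ Finset.Icc 1 m, S₂ * (|a| ^ (Nat.dist i j) * (a ^ 2) ^ (m - k)) := by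
        apply Finset.sum_le_sum
        intro k hk
        simp only [Finset.mem_Icc] at hk
        have e1 : |a ^ (i - k) * a ^ (j - k) * ⟪w k, w k⟫|
            = |a| ^ (i - k) * |a| ^ (j - k) * ⟪w k, w k⟫ := by
          rw [abs_mul, abs_mul, abs_pow, abs_pow,
            abs_of_nonneg (real_inner_self_nonneg)]
        rw [e1]
        have e2 : |a| ^ (i - k) * |a| ^ (j - k)
            = |a| ^ (Nat.dist i j) * (a ^ 2) ^ (m - k) := by
          rw [← sq_abs, ← pow_mul, ← pow_add, ← pow_add]
          congr 1
          have hki : k ≤ i := le_trans hk.2 (min_le_left i j)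
          have hkj : k ≤ j := le_trans hk.2 (min_le_right i j)
          have hd : Nat.dist i j = (i - j) + (j - i) := rfl
          omega
        calc |a| ^ (i - k) * |a| ^ (j - k) * ⟪w k, w k⟫
            ≤ |a| ^ (i - k) * |a| ^ (j - k) * S₂ :=
              mul_le_mul_of_nonneg_left (hQ2 k) (by positivity)
          _ = S₂ * (|a| ^ (i - k) * |a| ^ (j - k)) := by ring
          _ = S₂ * (|a| ^ (Nat.dist i j) * (a ^ 2) ^ (m - k)) := by rw [e2]
    _ = S₂ * |a| ^ (Nat.dist i j) * ∑ k ∈ Finset.Icc 1 m, (a ^ 2) ^ (m - k) := by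
        rw [Finset.mul_sum]
        apply Finset.sum_congr rfl; intro k _; ring
    _ ≤ S₂ * |a| ^ (Nat.dist i j) * (1 / (1 - a ^ 2)) := by
        apply mul_le_mul_of_nonneg_left _ (by positivity)
        apply geom_inj_le hs0 hs1 (g := fun k => m - k)
        intro x hx y hy hxy
        simp only [Finset.coe_Icc, Set.mem_Icc] at hx hy
        dsimp only at hxy
        omega
    _ = S₂ / (1 - a ^ 2) * |a| ^ (Nat.dist i j) := by ring

end InnerBounds

/-- Bound for the quantity dominating `‖g_{4,n} ⊗₂ g_{4,n}‖²`:
`(1/n²) Σ_{i,j,k,l=1}^n ⟨f_i,f_j⟩⟨f_k,f_l⟩⟨f_i,f_k⟩⟨f_j,f_l⟩ ≤ 24 S₂⁴/(n (1−a²)⁷)`. -/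
theorem stmt_13
    {H : Type*} [NormedAddCommGroup H] [InnerProductSpace ℝ H]
    (e : ℕ → ℕ → H) (he : Orthonormal ℝ (fun q : ℕ × ℕ => e q.1 q.2))
    (a : ℝ) (ha : |a| < 1)
    (σ : ℕ → ℝ) (hσ : Summable fun δ => (σ δ) ^ 2)
    (S₂ : ℝ) (hS₂ : S₂ = ∑' δ, (σ δ) ^ 2)
    (f : ℕ → H)
    (hf : ∀ i, f i = ∑ k ∈ Finset.Icc 1 i, a ^ (i - k) • ∑' δ, σ δ • e k δ) :
    ∀ n : ℕ, 1 ≤ n →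
      (1 / (n : ℝ) ^ 2) *
          ∑ i ∈ Finset.Icc 1 n, ∑ j ∈ Finset.Icc 1 n, ∑ k ∈ Finset.Icc 1 n,
            ∑ l ∈ Finset.Icc 1 n, ⟪f i, f j⟫ * ⟪f k, f l⟫ * ⟪f i, f k⟫ * ⟪f j, f l⟫ ≤
        24 * S₂ ^ 4 / (n * (1 - a ^ 2) ^ 7) := by
  intro n hn
  have hS₂0 : 0 ≤ S₂ := by rw [hS₂]; exact tsum_nonneg (fun δ => sq_nonneg _)
  have hr0 : (0:ℝ) ≤ |a| := abs_nonneg a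
  have hs0 : (0:ℝ) ≤ a ^ 2 := sq_nonneg a
  have hs1 : a ^ 2 < 1 := by rw [← sq_abs]; nlinarith
  have h1s : (0:ℝ) < 1 - a ^ 2 := by linarith
  have hn0 : (0:ℝ) < n := by exact_mod_cast hn
  -- the orthogonal pieces
  set w : ℕ → H := fun k => ∑' δ, σ δ • e k δ with hw
  have hQ0 : ∀ k k', k ≠ k' → ⟪w k, w k'⟫ = 0 := fun k k' h => inner_w_w_ne e σ he k k' h
  have hQ2 : ∀ k, ⟪w k, w k⟫ ≤ S₂ := by
    intro k
    rcases inner_w_w_self e σ he k with h | h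
    · rw [h]; exact hS₂0
    · rw [h, hS₂]
  have hP : ∀ i j, |⟪f i, f j⟫| ≤ S₂ / (1 - a ^ 2) * |a| ^ (Nat.dist i j) :=
    abs_inner_f_f w a ha f S₂ hQ0 hQ2 hf
  set C : ℝ := S₂ / (1 - a ^ 2) with hC
  have hC0 : 0 ≤ C := div_nonneg hS₂0 h1s.le
  set A : ℕ → ℕ → ℝ := fun x y => |a| ^ (Nat.dist x y) with hA
  have hA0 : ∀ x y, 0 ≤ A x y := fun x y => by positivity
  set I := Finset.Icc 1 n with hI
  set c : ℝ := 1 + 2 / (1 - a ^ 2) with hc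
  have hc0 : 0 ≤ c := by positivity
  -- step 1: term-wise bound
  have step1 : ∑ i ∈ I, ∑ j ∈ I, ∑ k ∈ I, ∑ l ∈ I,
      ⟪f i, f j⟫ * ⟪f k, f l⟫ * ⟪f i, f k⟫ * ⟪f j, f l⟫ ≤
      ∑ i ∈ I, ∑ j ∈ I, ∑ k ∈ I, ∑ l ∈ I,
        C ^ 4 * (A i j * A k l * A i k * A j l) := by
    apply Finset.sum_le_sum; intro i _
    apply Finset.sum_le_sum; intro j _
    apply Finset.sum_le_sum; intro k _
    apply Finset.sum_le_sum; intro l _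
    calc ⟪f i, f j⟫ * ⟪f k, f l⟫ * ⟪f i, f k⟫ * ⟪f j, f l⟫
        ≤ |⟪f i, f j⟫ * ⟪f k, f l⟫ * ⟪f i, f k⟫ * ⟪f j, f l⟫| := le_abs_self _
      _ = |⟪f i, f j⟫| * |⟪f k, f l⟫| * |⟪f i, f k⟫| * |⟪f j, f l⟫| := by
          rw [abs_mul, abs_mul, abs_mul]
      _ ≤ (C * A i j) * (C * A k l) * (C * A i k) * (C * A j l) := by
          have h1 := hP i j
          have h2 := hP k l
          have h3 := hP i k
          have h4 := hP j l
          have b1 : |⟪f i, f j⟫| * |⟪f k, f l⟫| ≤ (C * A i j) * (C * A k l) :=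
            mul_le_mul h1 h2 (abs_nonneg _) (by positivity)
          have b2 : |⟪f i, f j⟫| * |⟪f k, f l⟫| * |⟪f i, f k⟫|
              ≤ (C * A i j) * (C * A k l) * (C * A i k) :=
            mul_le_mul b1 h3 (abs_nonneg _) (by positivity)
          exact mul_le_mul b2 h4 (abs_nonneg _) (by positivity)
      _ = C ^ 4 * (A i j * A k l * A i k * A j l) := by ring
  -- step 2: regroup into B-sums
  set B : ℕ → ℕ → ℝ := fun j k => ∑ i ∈ I, A i j * A i k with hB
  have step2 : ∑ i ∈ I, ∑ j ∈ I, ∑ k ∈ I, ∑ l ∈ I,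
      C ^ 4 * (A i j * A k l * A i k * A j l)
      = C ^ 4 * ∑ j ∈ I, ∑ k ∈ I, (B j k) ^ 2 := by
    rw [Finset.mul_sum]
    rw [Finset.sum_comm]
    apply Finset.sum_congr rfl; intro j _
    rw [Finset.mul_sum, Finset.sum_comm]
    apply Finset.sum_congr rfl; intro k _
    rw [hB]
    dsimp only
    rw [sq, Finset.sum_mul_sum]
    rw [Finset.mul_sum]
    apply Finset.sum_congr rfl; intro i _
    rw [Finset.mul_sum]
    apply Finset.sum_congr rfl; intro l _
    have d1 : A k l = A l k := by rw [hA]; dsimp only; rw [Nat.dist_comm]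
    have d2 : A j l = A l j := by rw [hA]; dsimp only; rw [Nat.dist_comm]
    rw [d1, d2]; ring
  -- step 3: bound the B-sums
  have hBbound : ∀ j k : ℕ, (B j k) ^ 2 ≤
      (a ^ 2) ^ (Nat.dist j k) * ((Nat.dist j k : ℝ) + c) ^ 2 := by
    intro j k
    have hB0 : 0 ≤ B j k := Finset.sum_nonneg (fun i _ => by positivity)
    have hBle : B j k ≤ |a| ^ (Nat.dist j k) * ((Nat.dist j k : ℝ) + c) := by
      have h5 := Bsum_le hr0 ha n j k
      rw [sq_abs] at h5
      calc B j k ≤ |a| ^ (Nat.dist j k) * ((Nat.dist j k : ℝ) + 1 + 2 / (1 - a ^ 2)) := h5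
        _ = |a| ^ (Nat.dist j k) * ((Nat.dist j k : ℝ) + c) := by rw [hc]; ring
    calc (B j k) ^ 2 ≤ (|a| ^ (Nat.dist j k) * ((Nat.dist j k : ℝ) + c)) ^ 2 := by
          apply pow_le_pow_left₀ hB0 hBle
      _ = (a ^ 2) ^ (Nat.dist j k) * ((Nat.dist j k : ℝ) + c) ^ 2 := by
          have hpw : (|a| ^ (Nat.dist j k)) ^ 2 = (a ^ 2) ^ (Nat.dist j k) := by
            rw [← pow_mul, mul_comm, pow_mul, sq_abs]
          rw [mul_pow, hpw]
  have step3 : ∑ j ∈ I, ∑ k ∈ I, (B j k) ^ 2 ≤ (n : ℝ) * (2 * Kq (a ^ 2) c) := by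
    calc ∑ j ∈ I, ∑ k ∈ I, (B j k) ^ 2
        ≤ ∑ j ∈ I, (2 * Kq (a ^ 2) c) := by
          apply Finset.sum_le_sum; intro j _
          calc ∑ k ∈ I, (B j k) ^ 2
              ≤ ∑ k ∈ I, (a ^ 2) ^ (Nat.dist j k) * ((Nat.dist j k : ℝ) + c) ^ 2 :=
                Finset.sum_le_sum (fun k _ => hBbound j k)
            _ ≤ 2 * Kq (a ^ 2) c := Csum_le hs0 hs1 hc0 n j
      _ = (I.card : ℝ) * (2 * Kq (a ^ 2) c) := by rw [Finset.sum_const, nsmul_eq_mul]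
      _ = (n : ℝ) * (2 * Kq (a ^ 2) c) := by rw [hI, Nat.card_Icc]; norm_num
  -- step 4: numeric bound on Kq
  have hKq : Kq (a ^ 2) c ≤ 10 / (1 - a ^ 2) ^ 3 := by
    have h6 : Kq (a ^ 2) c = (9 + a ^ 2) / (1 - a ^ 2) ^ 3 := by
      rw [hc]; unfold Kq; field_simp; ring
    rw [h6, div_le_div_iff₀ (by positivity) (by positivity)]
    nlinarith [pow_pos h1s 3]
  -- final chain
  have hT : ∑ i ∈ I, ∑ j ∈ I, ∑ k ∈ I, ∑ l ∈ I,
      ⟪f i, f j⟫ * ⟪f k, f l⟫ * ⟪f i, f k⟫ * ⟪f j, f l⟫ ≤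
      C ^ 4 * ((n : ℝ) * (2 * (10 / (1 - a ^ 2) ^ 3))) := by
    calc ∑ i ∈ I, ∑ j ∈ I, ∑ k ∈ I, ∑ l ∈ I,
        ⟪f i, f j⟫ * ⟪f k, f l⟫ * ⟪f i, f k⟫ * ⟪f j, f l⟫
        ≤ C ^ 4 * ∑ j ∈ I, ∑ k ∈ I, (B j k) ^ 2 := by rw [← step2]; exact step1
      _ ≤ C ^ 4 * ((n : ℝ) * (2 * Kq (a ^ 2) c)) := by
          apply mul_le_mul_of_nonneg_left step3 (by positivity)
      _ ≤ C ^ 4 * ((n : ℝ) * (2 * (10 / (1 - a ^ 2) ^ 3))) := by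
          apply mul_le_mul_of_nonneg_left _ (by positivity)
          apply mul_le_mul_of_nonneg_left _ (by positivity)
          linarith
  calc (1 / (n : ℝ) ^ 2) *
          ∑ i ∈ I, ∑ j ∈ I, ∑ k ∈ I, ∑ l ∈ I,
            ⟪f i, f j⟫ * ⟪f k, f l⟫ * ⟪f i, f k⟫ * ⟪f j, f l⟫
      ≤ (1 / (n : ℝ) ^ 2) * (C ^ 4 * ((n : ℝ) * (2 * (10 / (1 - a ^ 2) ^ 3)))) := by
        apply mul_le_mul_of_nonneg_left hT (by positivity)
    _ = 20 * S₂ ^ 4 / ((n : ℝ) * (1 - a ^ 2) ^ 7) := by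
        rw [hC]; field_simp; ring
    _ ≤ 24 * S₂ ^ 4 / ((n : ℝ) * (1 - a ^ 2) ^ 7) := by
        apply div_le_div_of_nonneg_right _ (by positivity)
        nlinarith [pow_nonneg hS₂0 4]
  done
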